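/- Algebraic core of the Kähler quantization theorem (Theorem: 'the geometric quantization Q(S, ω̃) carries a Hermitian representation of A'): Let L be an A-module, let V, ∇, Ω be as in the context, and let μ : g → A be an ℝ-linear map satisfying the quantization condition and also the prequantization condition for ω, where ω(X,Y) := Ω(α(X), α(Y)). Let P ⊆ V be a subset (the Kähler polarization) such that [α(X), v] ∈ P for all X ∈ g and v ∈ P, and let Q := {s ∈ L : ∇(v)(s) = 0 for all v ∈ P} be the set of polarized (holomorphic) sections. Then π(X)(s) := ∇(α(X))(s) − ((2πi) • μ(X)) • s maps Q into Q for every X ∈ g, and on Q the map π is a Lie algebra homomorphism: π([X,Y])(s) = π(X)(π(Y)(s)) − π(Y)(π(X)(s)) for all X, Y ∈ g and s ∈ Q. -/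
import Mathlib


/-- **Algebraic core of the Kähler quantization theorem.**
`V` models the vector fields tangent to the fibers of `J̃` (a Lie subalgebra of the
derivations of `A`), `∇` a partial connection on `L` with curvature `Ω`, `μ` a
momentum map satisfying both the quantization and prequantization conditions, and
`P ⊆ V` the Kähler polarization, invariant under bracketing with the action vector
fields.  Then the Kostant operator `π(X) s = ∇(α X) s − ((2πi) • μ(X)) • s`
preserves the space `Q` of polarized (holomorphic) sections and is a Lie algebra
homomorphism on `Q`. -/
theorem kaehler_quantization_representation
    {A : Type*} [CommRing A] [Algebra ℂ A]
    {g : Type*} [LieRing g] [LieAlgebra ℝ g]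
    {L : Type*} [AddCommGroup L] [Module A L] [Module ℝ L]
    (α : g →ₗ[ℝ] Derivation ℂ A A)
    (hα : ∀ (X Y : g) (a : A), α ⁅X, Y⁆ a = α X (α Y a) - α Y (α X a))
    (V : Set (Derivation ℂ A A))
    (hVadd : ∀ v ∈ V, ∀ w ∈ V, v + w ∈ V)
    (hVsmul : ∀ (r : ℝ), ∀ v ∈ V, r • v ∈ V)
    (hVlie : ∀ v ∈ V, ∀ w ∈ V, ⁅v, w⁆ ∈ V)
    (hαV : ∀ X : g, α X ∈ V)
    (nabla : Derivation ℂ A A → L →ₗ[ℝ] L)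
    (hnabla : ∀ v ∈ V, ∀ (a : A) (s : L), nabla v (a • s) = a • nabla v s + v a • s)
    (Ω : Derivation ℂ A A → Derivation ℂ A A → A)
    (hΩalt : ∀ v ∈ V, Ω v v = 0)
    (hΩanti : ∀ v ∈ V, ∀ w ∈ V, Ω v w = - Ω w v)
    (hcurv : ∀ v ∈ V, ∀ w ∈ V, ∀ s : L,
      nabla v (nabla w s) - nabla w (nabla v s) - nabla ⁅v, w⁆ s
        = ((2 * (Real.pi : ℂ) * Complex.I) • Ω v w) • s)
    (μ : g →ₗ[ℝ] A)
    (hquant : ∀ (X : g), ∀ v ∈ V, v (μ X) = - Ω (α X) v)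
    (hpreq : ∀ X Y : g, μ ⁅X, Y⁆ - α X (μ Y) + α Y (μ X) = - Ω (α X) (α Y))
    (P : Set (Derivation ℂ A A)) (hPV : P ⊆ V)
    (hPinv : ∀ (X : g), ∀ v ∈ P, ⁅α X, v⁆ ∈ P)
    (π : g → L → L)
    (hπ : ∀ (X : g) (s : L),
      π X s = nabla (α X) s - ((2 * (Real.pi : ℂ) * Complex.I) • μ X) • s) :
    (∀ (X : g) (s : L), (∀ v ∈ P, nabla v s = 0) → ∀ v ∈ P, nabla v (π X s) = 0) ∧
    (∀ (X Y : g) (s : L), (∀ v ∈ P, nabla v s = 0) →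
      π ⁅X, Y⁆ s = π X (π Y s) - π Y (π X s)) := by

  set c : ℂ := 2 * (Real.pi : ℂ) * Complex.I with hc
  constructor
  · intro X s hs v hv
    have hvV := hPV hv
    have hw : nabla ⁅α X, v⁆ s = 0 := hs _ (hPinv X v hv)
    have hvs : nabla v s = 0 := hs v hv
    have hcu := hcurv (α X) (hαV X) v hvV s
    rw [hvs] at hcu
    simp only [map_zero] at hcu
    have h1 : nabla v (nabla (α X) s) = -((c • Ω (α X) v) • s) := by
      rw [← hcu, hw]; abel
    rw [hπ, map_sub, h1]
    have h2 : nabla v ((c • μ X) • s) = (v (c • μ X)) • s := by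
      rw [hnabla v hvV, hvs, smul_zero, zero_add]
    rw [h2, Derivation.map_smul, hquant X v hvV]
    rw [smul_neg, neg_smul]
    abel
  · intro X Y s _hs
    have hcomm : α ⁅X, Y⁆ = ⁅α X, α Y⁆ := by
      ext a
      rw [hα]
      rfl
    have hμ : μ ⁅X, Y⁆ = α X (μ Y) - α Y (μ X) - Ω (α X) (α Y) := by
      have := hpreq X Y
      linear_combination this
    have hcu := hcurv (α X) (hαV X) (α Y) (hαV Y) s
    have hD : nabla ⁅α X, α Y⁆ s
        = nabla (α X) (nabla (α Y) s) - nabla (α Y) (nabla (α X) s)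
          - (c • Ω (α X) (α Y)) • s := by
      rw [← hcu]; abel
    have key : ∀ Z W : g, π Z (π W s)
        = nabla (α Z) (nabla (α W) s) - (c • μ W) • nabla (α Z) s
          - (c • α Z (μ W)) • s - (c • μ Z) • nabla (α W) s
          + ((c • μ Z) * (c • μ W)) • s := by
      intro Z W
      rw [hπ, hπ W s, map_sub, hnabla _ (hαV Z), Derivation.map_smul, smul_sub, smul_smul]
      abel
    rw [hπ, key X Y, key Y X, hcomm, hD, hμ]
    rw [smul_sub, smul_sub, sub_smul, sub_smul, mul_comm (c • μ Y) (c • μ X)]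
    abel
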